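/- Let p > 3 be a prime, let d ∈ F_p, let α ∈ F_p satisfy α² = −3d, and let x, y ∈ F_p with x ≠ 0 and y² = x³ + d. Then y·(x³ − 8d)/x³ − 3α = ((y − α)/x)³. (This is the identity f_T ∘ τ_d = g_T³ for f_T = Y − 3α and g_T = (Y − α)/X on the curve y² = x³ + d.) -/

import Mathlib

/-- Let `p > 3` be prime, `d ∈ F_p`, `α² = -3d`, and `(x, y)` an affine point
of `y² = x³ + d` with `x ≠ 0`.  Then `f_T ∘ τ_d = g_T ³`, i.e.
`y(x³ - 8d)/x³ - 3α = ((y - α)/x)³`. -/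
theorem fT_comp_tau_eq_gT_cubed
    (p : ℕ) [Fact p.Prime] (hp : 3 < p)
    (d α x y : ZMod p) (hα : α ^ 2 = -3 * d)
    (hx : x ≠ 0) (hy : y ^ 2 = x ^ 3 + d) :
    y * (x ^ 3 - 8 * d) / x ^ 3 - 3 * α = ((y - α) / x) ^ 3 := by
  have h3 : x ^ 3 ≠ 0 := pow_ne_zero _ hx
  rw [div_sub' h3, div_pow, div_eq_div_iff h3 h3]
  linear_combination (y - 3 * α) * x ^ 3 * hy + (3 * y - α) * x ^ 3 * hα + (6 * x ^ 3 * α - 2 * x ^ 3 * y) * hy + (6 * x ^ 3 * y - 2 * x ^ 3 * α) * hα + (-12 * x ^ 3 * y + 4 * x ^ 3 * α) * hα
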